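/- The sequence of mean iterated distances is nonincreasing: if ρ_{n} is obtained from ρ_{n-1} by the Kantorovich iteration along a measurable partition ξ_n of the probability space (X, μ), then ∫_{X×X} ρ_n(x,y) dμ(x)dμ(y) ≤ ∫_{X×X} ρ_{n-1}(x,y) dμ(x)dμ(y). -/

import Mathlib

open MeasureTheory

/-- A coupling of `μ₁` and `μ₂`: a probability measure on `A × A` with the
prescribed marginals. -/
def IsCoupling {A : Type*} [MeasurableSpace A]
    (Q : Measure (A × A)) (μ₁ μ₂ : Measure A) : Prop :=
  IsProbabilityMeasure Q ∧ Q.map Prod.fst = μ₁ ∧ Q.map Prod.snd = μ₂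

/-- The Kantorovich transport distance associated with a cost function `c`. -/
noncomputable def kantCost {A : Type*} [MeasurableSpace A] (c : A → A → ℝ)
    (μ₁ μ₂ : Measure A) : ℝ :=
  sInf {t | ∃ Q : Measure (A × A), IsCoupling Q μ₁ μ₂ ∧ t = ∫ p, c p.1 p.2 ∂Q}

/-- One step of the Kantorovich iteration along a measurable partition does not increase
the mean distance.  Here `m x` is the conditional measure of `μ` on the element of the
partition containing `x` (so `m` is constant on partition elements and the conditional
measures disintegrate `μ`), `ρprev` is a bounded measurable semimetric, and
`ρnext x y = k_{ρprev}(m x, m y)` is the iterated semimetric.  Then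
`∫∫ ρnext dμ dμ ≤ ∫∫ ρprev dμ dμ`. -/
theorem mean_iterated_distance_nonincreasing
    {X : Type*} [MeasurableSpace X] (μ : Measure X) [IsProbabilityMeasure μ]
    (m : X → Measure X) (hprob : ∀ x, IsProbabilityMeasure (m x))
    (hmeas_m : ∀ s : Set X, MeasurableSet s → Measurable fun x => m x s)
    (hconst : ∀ x : X, (m x) {z | m z = m x} = 1)
    (hdisint : ∀ f : X → ℝ, Measurable f → (∃ C, ∀ x, |f x| ≤ C) →
      (∫ x, (∫ y, f y ∂(m x)) ∂μ) = ∫ x, f x ∂μ)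
    (ρprev : X → X → ℝ)
    (hmeas : Measurable fun p : X × X => ρprev p.1 p.2)
    (hbdd : ∃ C, ∀ x y, |ρprev x y| ≤ C)
    (hnonneg : ∀ x y, 0 ≤ ρprev x y)
    (hsymm : ∀ x y, ρprev x y = ρprev y x)
    (htri : ∀ x y z, ρprev x z ≤ ρprev x y + ρprev y z)
    (hrefl : ∀ x, ρprev x x = 0)
    (ρnext : X → X → ℝ)
    (hiter : ∀ x y, ρnext x y = kantCost ρprev (m x) (m y)) :
    (∫ x, ∫ y, ρnext x y ∂μ ∂μ) ≤ ∫ x, ∫ y, ρprev x y ∂μ ∂μ := by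
  classical
  obtain ⟨C, hC⟩ := hbdd
  -- the kernel associated with `m`
  have hm_meas : Measurable m := Measure.measurable_of_measurable_coe m hmeas_m
  let κ : ProbabilityTheory.Kernel X X := ⟨m, hm_meas⟩
  haveI : ProbabilityTheory.IsMarkovKernel κ := ⟨fun x => hprob x⟩
  have hκ : ∀ x, κ x = m x := fun _ => rfl
  haveI : ∀ x, IsProbabilityMeasure (m x) := hprob
  -- `h (a, y) = ∫ b, ρprev a b ∂(m y)`
  set h : X × X → ℝ := fun p => ∫ b, ρprev p.1 b ∂ m p.2 with hh_def
  have hh_sm : StronglyMeasurable h := by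
    have : Measurable (Function.uncurry fun (p : X × X) (b : X) => ρprev p.1 b) := by
      exact hmeas.comp (measurable_fst.fst.prodMk measurable_snd)
    have := (this.stronglyMeasurable).integral_kernel_prod_right
      (κ := κ.comap Prod.snd measurable_snd)
    simpa [ProbabilityTheory.Kernel.comap_apply, hh_def, hκ] using this
  have hh_bdd : ∀ p, |h p| ≤ C := by
    intro p
    rw [← Real.norm_eq_abs]
    calc ‖h p‖ ≤ C * ((m p.2) Set.univ).toReal :=
          norm_integral_le_of_norm_le_const (ae_of_all _ fun b => by
            rw [Real.norm_eq_abs]; exact hC _ _)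
      _ = C := by simp
  -- `F a = ∫ b, ρprev a b ∂μ`
  set F : X → ℝ := fun a => ∫ b, ρprev a b ∂μ with hF_def
  have hF_sm : StronglyMeasurable F := hmeas.stronglyMeasurable.integral_prod_right'
  have hF_bdd : ∀ a, |F a| ≤ C := by
    intro a
    rw [← Real.norm_eq_abs]
    calc ‖F a‖ ≤ C * (μ Set.univ).toReal :=
          norm_integral_le_of_norm_le_const (ae_of_all _ fun b => by
            rw [Real.norm_eq_abs]; exact hC _ _)
      _ = C := by simp
  have hCnn : 0 ≤ C := by
    have : Nonempty X := by
      by_contra hne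
      have := measure_univ (μ := μ)
      rw [Set.univ_eq_empty_iff.mpr (not_nonempty_iff.mp hne)] at this
      simp at this
    obtain ⟨x⟩ := this
    exact le_trans (abs_nonneg _) (hC x x)
  -- pointwise bound for `ρnext` by the product coupling
  have hρnext_le : ∀ x y, ρnext x y ≤ ∫ a, h (a, y) ∂ m x := by
    intro x y
    rw [hiter]
    have hint : Integrable (fun p : X × X => ρprev p.1 p.2) ((m x).prod (m y)) :=
      ⟨hmeas.aestronglyMeasurable,
        HasFiniteIntegral.of_bounded (C := C) (ae_of_all _ fun p => by
          rw [Real.norm_eq_abs]; exact hC _ _)⟩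
    have hmem : (∫ p : X × X, ρprev p.1 p.2 ∂((m x).prod (m y))) ∈
        {t | ∃ Q : Measure (X × X), IsCoupling Q (m x) (m y) ∧ t = ∫ p, ρprev p.1 p.2 ∂Q} := by
      refine ⟨(m x).prod (m y), ⟨inferInstance, ?_, ?_⟩, rfl⟩
      · rw [Measure.map_fst_prod]; simp
      · rw [Measure.map_snd_prod]; simp
    have hbdd0 : ∀ t ∈ {t | ∃ Q : Measure (X × X), IsCoupling Q (m x) (m y) ∧
        t = ∫ p, ρprev p.1 p.2 ∂Q}, (0 : ℝ) ≤ t := by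
      rintro t ⟨Q, _, rfl⟩
      exact integral_nonneg fun p => hnonneg _ _
    have := csInf_le ⟨0, fun t ht => hbdd0 t ht⟩ hmem
    refine le_trans this ?_
    rw [integral_prod _ hint]
  -- nonnegativity of `ρnext`
  have hρnext_nonneg : ∀ x y, 0 ≤ ρnext x y := by
    intro x y
    rw [hiter]
    refine le_csInf ?_ ?_
    · refine ⟨_, (m x).prod (m y), ⟨inferInstance, ?_, ?_⟩, rfl⟩
      · rw [Measure.map_fst_prod]; simp
      · rw [Measure.map_snd_prod]; simp
    · rintro t ⟨Q, _, rfl⟩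
      exact integral_nonneg fun p => hnonneg _ _
  -- `G x = ∫ a, F a ∂(m x)` and the inner bound `∫ y, ρnext x y ∂μ ≤ G x`
  set G : X → ℝ := fun x => ∫ a, F a ∂ m x with hG_def
  have hG_sm : StronglyMeasurable G := by
    have : Measurable (Function.uncurry fun (x : X) (a : X) => F a) :=
      hF_sm.measurable.comp measurable_snd
    have := (this.stronglyMeasurable).integral_kernel_prod_right (κ := κ)
    simpa [hκ] using this
  have hG_bdd : ∀ x, |G x| ≤ C := by
    intro x
    rw [← Real.norm_eq_abs]
    calc ‖G x‖ ≤ C * ((m x) Set.univ).toReal :=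
          norm_integral_le_of_norm_le_const (ae_of_all _ fun a => by
            rw [Real.norm_eq_abs]; exact hF_bdd a)
      _ = C := by simp
  have hinner : ∀ x, (∫ y, ρnext x y ∂μ) ≤ G x := by
    intro x
    have hswap : Integrable (Function.uncurry fun (y : X) (a : X) => h (a, y))
        (μ.prod (m x)) := by
      refine ⟨?_, HasFiniteIntegral.of_bounded (C := C) (ae_of_all _ fun p => by
        rw [Real.norm_eq_abs]; exact hh_bdd _)⟩
      exact (hh_sm.comp_measurable
        (measurable_snd.prodMk measurable_fst)).aestronglyMeasurable
    have hgy_int : Integrable (fun y => ∫ a, h (a, y) ∂ m x) μ := by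
      refine ⟨?_, HasFiniteIntegral.of_bounded (C := C) (ae_of_all _ fun y => ?_)⟩
      · exact (hh_sm.integral_prod_left' (μ := m x)).aestronglyMeasurable
      · rw [Real.norm_eq_abs, ← Real.norm_eq_abs]
        calc ‖∫ a, h (a, y) ∂ m x‖ ≤ C * ((m x) Set.univ).toReal :=
              norm_integral_le_of_norm_le_const (ae_of_all _ fun a => by
                rw [Real.norm_eq_abs]; exact hh_bdd _)
          _ = C := by simp
    calc (∫ y, ρnext x y ∂μ) ≤ ∫ y, (∫ a, h (a, y) ∂ m x) ∂μ :=
          integral_mono_of_nonneg (ae_of_all _ fun y => hρnext_nonneg x y) hgy_int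
            (ae_of_all _ fun y => hρnext_le x y)
      _ = ∫ a, (∫ y, h (a, y) ∂μ) ∂ m x := integral_integral_swap hswap
      _ = ∫ a, F a ∂ m x := by
          refine integral_congr_ae (ae_of_all _ fun a => ?_)
          have := hdisint (fun b => ρprev a b)
            (hmeas.comp (measurable_const.prodMk measurable_id))
            ⟨C, fun b => hC a b⟩
          simpa [hh_def, hF_def] using this
      _ = G x := rfl
  -- outer step
  have hG_int : Integrable G μ :=
    ⟨hG_sm.aestronglyMeasurable, HasFiniteIntegral.of_bounded (C := C)
      (ae_of_all _ fun x => by rw [Real.norm_eq_abs]; exact hG_bdd x)⟩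
  calc (∫ x, ∫ y, ρnext x y ∂μ ∂μ) ≤ ∫ x, G x ∂μ :=
        integral_mono_of_nonneg
          (ae_of_all _ fun x => integral_nonneg fun y => hρnext_nonneg x y)
          hG_int (ae_of_all _ fun x => hinner x)
    _ = ∫ a, F a ∂μ := hdisint F hF_sm.measurable ⟨C, hF_bdd⟩
    _ = ∫ x, ∫ y, ρprev x y ∂μ ∂μ := rfl
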